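/- Let A be Hurwitz in ℝ^{n×n}, and suppose a symmetric matrix X ≥ 0 satisfies AᵀX + XA + H₁ − H₂ = 0 where H₁, H₂ are symmetric positive semidefinite. Then Tr(X) ≤ Tr(P_A)·Tr(H₁), where P_A = ∫₀^∞ exp(Aᵀt)·exp(At) dt. -/

import Mathlib

open Matrix

/-- `A` is Hurwitz: every complex eigenvalue of `A` has negative real part. -/
def IsHurwitz {n : ℕ} (A : Matrix (Fin n) (Fin n) ℝ) : Prop :=
  ∀ μ ∈ spectrum ℂ (A.map Complex.ofReal), μ.re < 0

namespace LyapunovAux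

open NormedSpace MeasureTheory Set Filter Finset

/-! ### Purely algebraic trace inequalities for positive semidefinite matrices -/

open scoped MatrixOrder in
lemma posSemidef_iff_eq_transpose_mul_self {n : ℕ} {M : Matrix (Fin n) (Fin n) ℝ} :
    M.PosSemidef ↔ ∃ B : Matrix (Fin n) (Fin n) ℝ, M = Bᴴ * B := by
  constructor
  · intro hM
    obtain ⟨B, hB⟩ := CStarAlgebra.nonneg_iff_eq_star_mul_self.mp hM.nonneg
    exact ⟨B, hB⟩
  · rintro ⟨B, rfl⟩
    exact posSemidef_conjTranspose_mul_self B

lemma trace_conjTranspose_mul_self_eq {n : ℕ} (D : Matrix (Fin n) (Fin n) ℝ) :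
    (Dᴴ * D).trace = ∑ j, ∑ i, (D i j) ^ 2 := by
  simp [Matrix.trace, Matrix.diag, Matrix.mul_apply, Matrix.conjTranspose_apply, sq]

lemma trace_mul_eq_trace_self {n : ℕ} (B C : Matrix (Fin n) (Fin n) ℝ) :
    ((Bᴴ * B) * (Cᴴ * C)).trace = ((B * Cᴴ)ᴴ * (B * Cᴴ)).trace := by
  rw [conjTranspose_mul, conjTranspose_conjTranspose]
  calc ((Bᴴ * B) * (Cᴴ * C)).trace
      = (Bᴴ * (B * Cᴴ * C)).trace := by
        rw [mul_assoc Bᴴ B (Cᴴ * C), ← mul_assoc B Cᴴ C]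
    _ = ((B * Cᴴ * C) * Bᴴ).trace := trace_mul_comm _ _
    _ = ((B * Cᴴ) * (C * Bᴴ)).trace := by rw [mul_assoc]
    _ = ((C * Bᴴ) * (B * Cᴴ)).trace := trace_mul_comm _ _

lemma trace_mul_nonneg {n : ℕ} {M N : Matrix (Fin n) (Fin n) ℝ}
    (hM : M.PosSemidef) (hN : N.PosSemidef) : 0 ≤ (M * N).trace := by
  obtain ⟨B, rfl⟩ := posSemidef_iff_eq_transpose_mul_self.mp hM
  obtain ⟨C, rfl⟩ := posSemidef_iff_eq_transpose_mul_self.mp hN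
  rw [trace_mul_eq_trace_self, trace_conjTranspose_mul_self_eq]
  exact Finset.sum_nonneg fun j _ => Finset.sum_nonneg fun i _ => sq_nonneg _

lemma trace_mul_le_trace_mul_trace {n : ℕ} {M N : Matrix (Fin n) (Fin n) ℝ}
    (hM : M.PosSemidef) (hN : N.PosSemidef) : (M * N).trace ≤ M.trace * N.trace := by
  obtain ⟨B, rfl⟩ := posSemidef_iff_eq_transpose_mul_self.mp hM
  obtain ⟨C, rfl⟩ := posSemidef_iff_eq_transpose_mul_self.mp hN
  rw [trace_mul_eq_trace_self, trace_conjTranspose_mul_self_eq,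
    trace_conjTranspose_mul_self_eq, trace_conjTranspose_mul_self_eq]
  have key : ∀ a b : Fin n, ((B * Cᴴ) a b) ^ 2 ≤ (∑ k, (B a k) ^ 2) * (∑ k, (C b k) ^ 2) := by
    intro a b
    have h := Finset.sum_mul_sq_le_sq_mul_sq Finset.univ (fun k => B a k) (fun k => C b k)
    have hD : (B * Cᴴ) a b = ∑ k, B a k * C b k := by
      simp [Matrix.mul_apply, Matrix.conjTranspose_apply]
    rw [hD]; exact h
  calc ∑ j, ∑ i, ((B * Cᴴ) i j) ^ 2
      ≤ ∑ j, ∑ i, (∑ k, (B i k) ^ 2) * (∑ k, (C j k) ^ 2) :=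
        Finset.sum_le_sum fun j _ => Finset.sum_le_sum fun i _ => key i j
    _ = (∑ i, ∑ k, (B i k) ^ 2) * (∑ j, ∑ k, (C j k) ^ 2) := by
        rw [Finset.sum_mul_sum]; exact Finset.sum_comm
    _ = (∑ j, ∑ i, (B i j) ^ 2) * (∑ j, ∑ i, (C i j) ^ 2) := by
        rw [Finset.sum_comm (f := fun i k => (B i k)^2), Finset.sum_comm (f := fun j k => (C j k)^2)]

end LyapunovAux

section InnerAnalysis

namespace LyapunovAux

open NormedSpace MeasureTheory Set Filter Finset

attribute [local instance] Matrix.linftyOpSemiNormedRing Matrix.linftyOpNormedRing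
  Matrix.linftyOpNormedAlgebra

/-- Decay of `exp (t • B) *ᵥ v` for a complex matrix whose spectrum lies in `re ≤ -2c`. -/
lemma vec_decay {n : ℕ} (B : Matrix (Fin n) (Fin n) ℂ) {c : ℝ} (hc : 0 < c)
    (hspec : ∀ μ ∈ spectrum ℂ B, μ.re ≤ -(2 * c)) (v : Fin n → ℂ) :
    ∃ C, 0 ≤ C ∧ ∀ t : ℝ, 0 ≤ t →
      ‖NormedSpace.exp (t • B) *ᵥ v‖ ≤ C * Real.exp (-(c * t)) := by
  classical
  set f : Module.End ℂ (Fin n → ℂ) := ↑(Matrix.toLinAlgEquiv' B) with hf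
  have hv : v ∈ ⨆ μ : ℂ, f.maxGenEigenspace μ := by
    rw [Module.End.iSup_maxGenEigenspace_eq_top]; trivial
  refine Submodule.iSup_induction (motive := fun w => ∃ C, 0 ≤ C ∧ ∀ t : ℝ, 0 ≤ t →
      ‖NormedSpace.exp (t • B) *ᵥ w‖ ≤ C * Real.exp (-(c * t))) _ hv ?_ ?_ ?_
  · -- generalized eigenvectors
    intro μ w hw
    by_cases hw0 : w = 0
    · exact ⟨0, le_refl 0, fun t _ => by simp [hw0]⟩
    obtain ⟨k, hk⟩ := (Module.End.mem_maxGenEigenspace _ μ w).mp hw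
    have hμS : μ ∈ spectrum ℂ B := by
      have h1 : f.HasEigenvalue μ := by
        refine Module.End.hasEigenvalue_of_hasGenEigenvalue (k := k) ?_
        refine Submodule.ne_bot_iff _ |>.mpr ⟨w, ?_, hw0⟩
        rw [Module.End.mem_genEigenspace_nat]
        exact hk
      rw [Module.End.hasEigenvalue_iff_mem_spectrum] at h1
      rw [hf] at h1
      rwa [AlgEquiv.spectrum_eq (Matrix.toLinAlgEquiv' (n := Fin n) (R := ℂ)) B] at h1
    have hμre : μ.re ≤ -(2 * c) := hspec μ hμS
    set N : Matrix (Fin n) (Fin n) ℂ := B - μ • 1 with hN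
    have hNk : N ^ k *ᵥ w = 0 := by
      have hgen : ∀ (m : ℕ) (u : Fin n → ℂ), ((f - μ • 1) ^ m) u = N ^ m *ᵥ u := by
        intro m
        induction m with
        | zero => intro u; simp [Matrix.one_mulVec]
        | succ m ih =>
            intro u
            have hg : (f - μ • 1) u = N *ᵥ u := by
              have h1 : (f - μ • 1) u = f u - μ • u := rfl
              rw [h1, hf, hN, Matrix.sub_mulVec, Matrix.toLinAlgEquiv'_apply]
              congr 1
              rw [Matrix.smul_mulVec, Matrix.one_mulVec]
            rw [pow_succ, Module.End.mul_apply, hg, ih, Matrix.mulVec_mulVec, ← pow_succ]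
      rw [hgen k w] at hk
      exact hk
    -- splitting the exponential
    have hsplit : ∀ t : ℝ, NormedSpace.exp (t • B)
        = Complex.exp ((t : ℂ) * μ) • NormedSpace.exp (t • N) := by
      intro t
      have hBsum : t • B = t • (μ • (1 : Matrix (Fin n) (Fin n) ℂ)) + t • N := by
        rw [← smul_add]
        congr 1
        rw [hN, add_sub_cancel]
      have hcomm : Commute (t • (μ • (1 : Matrix (Fin n) (Fin n) ℂ))) (t • N) :=
        (((Commute.one_left N).smul_left μ).smul_left t).smul_right t
      rw [hBsum, Matrix.exp_add_of_commute _ _ hcomm]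
      have h1 : NormedSpace.exp (t • μ • (1 : Matrix (Fin n) (Fin n) ℂ))
          = Complex.exp ((t : ℂ) * μ) • (1 : Matrix (Fin n) (Fin n) ℂ) := by
        rw [← smul_assoc]
        have h3 : (t • μ) • (1 : Matrix (Fin n) (Fin n) ℂ)
            = algebraMap ℂ (Matrix (Fin n) (Fin n) ℂ) (t • μ) := by
          rw [Algebra.algebraMap_eq_smul_one]
        erw [h3, ← NormedSpace.map_exp (algebraMap ℂ (Matrix (Fin n) (Fin n) ℂ))
          (continuous_algebraMap _ _)]
        rw [← Complex.exp_eq_exp_ℂ,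
          Algebra.algebraMap_eq_smul_one]
        norm_num [Complex.real_smul]
      rw [h1, smul_mul_assoc, one_mul]
    -- finite expansion of exp (t • N) *ᵥ w
    have hexpand : ∀ t : ℝ, NormedSpace.exp (t • N) *ᵥ w
        = ∑ m ∈ Finset.range k, (((m.factorial : ℝ))⁻¹ * t ^ m) • (N ^ m *ᵥ w) := by
      intro t
      let Lv : Matrix (Fin n) (Fin n) ℂ →ₗ[ℝ] (Fin n → ℂ) :=
        { toFun := fun M => M *ᵥ w
          map_add' := fun M₁ M₂ => Matrix.add_mulVec M₁ M₂ w
          map_smul' := fun r M => Matrix.smul_mulVec r M w }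
      have hsum := NormedSpace.expSeries_summable' (𝕂 := ℝ) (t • N)
      have h4 : NormedSpace.exp (t • N) *ᵥ w
          = (LinearMap.toContinuousLinearMap Lv)
              (∑' m : ℕ, ((m.factorial : ℝ))⁻¹ • (t • N) ^ m) := by
        rw [NormedSpace.exp_eq_tsum ℝ]
        rfl
      erw [h4, ← ((hsum.hasSum.mapL (LinearMap.toContinuousLinearMap Lv)).tsum_eq)]
      have h5 : ∀ m : ℕ, (LinearMap.toContinuousLinearMap Lv)
          (((m.factorial : ℝ))⁻¹ • (t • N) ^ m)
          = (((m.factorial : ℝ))⁻¹ * t ^ m) • (N ^ m *ᵥ w) := by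
        intro m
        have h5a : (LinearMap.toContinuousLinearMap Lv)
            (((m.factorial : ℝ))⁻¹ • (t • N) ^ m)
            = (((m.factorial : ℝ))⁻¹ • (t • N) ^ m) *ᵥ w := rfl
        rw [h5a, Matrix.smul_mulVec, smul_pow, Matrix.smul_mulVec, smul_smul]
      rw [tsum_congr h5]
      refine tsum_eq_sum ?_
      intro m hm
      have hkm : k ≤ m := by
        by_contra hlt
        exact hm (Finset.mem_range.mpr (lt_of_not_ge hlt))
      have hNm : N ^ m *ᵥ w = 0 := by
        have : N ^ m = N ^ (m - k) * N ^ k := by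
          rw [← pow_add, Nat.sub_add_cancel hkm]
        rw [this, ← Matrix.mulVec_mulVec, hNk, Matrix.mulVec_zero]
      rw [hNm, smul_zero]
    refine ⟨∑ m ∈ Finset.range k, c⁻¹ ^ m * ‖N ^ m *ᵥ w‖,
      Finset.sum_nonneg fun m _ => mul_nonneg (pow_nonneg (inv_nonneg.mpr hc.le) m)
        (norm_nonneg _), fun t ht => ?_⟩
    rw [hsplit t, Matrix.smul_mulVec, norm_smul, hexpand t]
    have habs : ‖Complex.exp ((t : ℂ) * μ)‖ = Real.exp (t * μ.re) := by
      rw [Complex.norm_exp]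
      congr 1
      simp
    rw [habs]
    calc Real.exp (t * μ.re)
          * ‖∑ m ∈ Finset.range k, (((m.factorial : ℝ))⁻¹ * t ^ m) • (N ^ m *ᵥ w)‖
        ≤ Real.exp (t * μ.re)
          * ∑ m ∈ Finset.range k, ((m.factorial : ℝ))⁻¹ * t ^ m * ‖N ^ m *ᵥ w‖ := by
          refine mul_le_mul_of_nonneg_left ?_ (Real.exp_nonneg _)
          refine (norm_sum_le _ _).trans (le_of_eq (Finset.sum_congr rfl fun m _ => ?_))
          rw [norm_smul, Real.norm_eq_abs, abs_of_nonneg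
            (mul_nonneg (inv_nonneg.mpr (Nat.cast_nonneg _)) (pow_nonneg ht m))]
      _ ≤ ∑ m ∈ Finset.range k, c⁻¹ ^ m * ‖N ^ m *ᵥ w‖ * Real.exp (-(c * t)) := by
          rw [Finset.mul_sum]
          refine Finset.sum_le_sum fun m _ => ?_
          have hfact : (0 : ℝ) < (m.factorial : ℝ) := by
            exact_mod_cast Nat.factorial_pos m
          have ht1 : t ^ m ≤ (m.factorial : ℝ) * c⁻¹ ^ m * Real.exp (c * t) := by
            have h6 := Real.pow_div_factorial_le_exp (c * t)
              (mul_nonneg hc.le ht) m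
            rw [mul_pow] at h6
            have h7 : c ^ m * t ^ m ≤ (m.factorial : ℝ) * Real.exp (c * t) := by
              rw [div_le_iff₀ hfact] at h6
              linarith [h6]
            have h8 : (0 : ℝ) < c ^ m := pow_pos hc m
            calc t ^ m = c⁻¹ ^ m * (c ^ m * t ^ m) := by
                  rw [← mul_assoc, ← mul_pow, inv_mul_cancel₀ hc.ne', one_pow, one_mul]
              _ ≤ c⁻¹ ^ m * ((m.factorial : ℝ) * Real.exp (c * t)) := by
                  exact mul_le_mul_of_nonneg_left h7 (pow_nonneg (inv_nonneg.mpr hc.le) m)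
              _ = (m.factorial : ℝ) * c⁻¹ ^ m * Real.exp (c * t) := by ring
          have ht2 : Real.exp (t * μ.re) ≤ Real.exp (-(c * t)) * Real.exp (-(c * t)) := by
            rw [← Real.exp_add]
            refine Real.exp_le_exp.mpr ?_
            nlinarith
          have hw1 : (0 : ℝ) ≤ ‖N ^ m *ᵥ w‖ := norm_nonneg _
          have hstep : Real.exp (t * μ.re) * (((m.factorial : ℝ))⁻¹ * t ^ m * ‖N ^ m *ᵥ w‖)
              ≤ (Real.exp (-(c * t)) * Real.exp (-(c * t)))
                * (((m.factorial : ℝ))⁻¹ * ((m.factorial : ℝ) * c⁻¹ ^ m * Real.exp (c * t))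
                  * ‖N ^ m *ᵥ w‖) := by
            refine mul_le_mul ht2 ?_ ?_ (mul_nonneg (Real.exp_nonneg _) (Real.exp_nonneg _))
            · refine mul_le_mul_of_nonneg_right
                (mul_le_mul_of_nonneg_left ht1 (inv_nonneg.mpr hfact.le)) hw1
            · positivity
          refine hstep.trans (le_of_eq ?_)
          have hee : Real.exp (-(c * t)) * Real.exp (c * t) = 1 := by
            rw [← Real.exp_add, neg_add_cancel, Real.exp_zero]
          have hF : ((m.factorial : ℝ))⁻¹ * (m.factorial : ℝ) = 1 :=
            inv_mul_cancel₀ hfact.ne'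
          calc (Real.exp (-(c * t)) * Real.exp (-(c * t)))
                * (((m.factorial : ℝ))⁻¹ * ((m.factorial : ℝ) * c⁻¹ ^ m * Real.exp (c * t))
                  * ‖N ^ m *ᵥ w‖)
              = c⁻¹ ^ m * ‖N ^ m *ᵥ w‖ * Real.exp (-(c * t))
                * ((Real.exp (-(c * t)) * Real.exp (c * t))
                  * (((m.factorial : ℝ))⁻¹ * (m.factorial : ℝ))) := by ring
            _ = c⁻¹ ^ m * ‖N ^ m *ᵥ w‖ * Real.exp (-(c * t)) := by
                rw [hee, hF]; ring
      _ = (∑ m ∈ Finset.range k, c⁻¹ ^ m * ‖N ^ m *ᵥ w‖) * Real.exp (-(c * t)) := by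
          rw [Finset.sum_mul]
  · exact ⟨0, le_refl 0, fun t _ => by simp⟩
  · rintro x y ⟨Cx, hCx0, hCx⟩ ⟨Cy, hCy0, hCy⟩
    refine ⟨Cx + Cy, by linarith, fun t ht => ?_⟩
    rw [Matrix.mulVec_add]
    calc ‖NormedSpace.exp (t • B) *ᵥ x + NormedSpace.exp (t • B) *ᵥ y‖
        ≤ ‖NormedSpace.exp (t • B) *ᵥ x‖ + ‖NormedSpace.exp (t • B) *ᵥ y‖ := norm_add_le _ _
      _ ≤ Cx * Real.exp (-(c * t)) + Cy * Real.exp (-(c * t)) :=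
          add_le_add (hCx t ht) (hCy t ht)
      _ = (Cx + Cy) * Real.exp (-(c * t)) := by ring

/-- Entrywise decay for a complex Hurwitz matrix. -/
lemma centry_decay {n : ℕ} (B : Matrix (Fin n) (Fin n) ℂ)
    (hB : ∀ μ ∈ spectrum ℂ B, μ.re < 0) :
    ∃ c C : ℝ, 0 < c ∧ 0 ≤ C ∧ ∀ t : ℝ, 0 ≤ t → ∀ i j,
      ‖NormedSpace.exp (t • B) i j‖ ≤ C * Real.exp (-(c * t)) := by
  classical
  obtain ⟨c, hc, hcs⟩ : ∃ c : ℝ, 0 < c ∧ ∀ μ ∈ spectrum ℂ B, μ.re ≤ -(2 * c) := by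
    by_cases hS : (spectrum ℂ B).Nonempty
    · have hFne : (Matrix.finite_spectrum B).toFinset.Nonempty :=
        (Set.Finite.toFinset_nonempty _).mpr hS
      refine ⟨((Matrix.finite_spectrum B).toFinset.inf' hFne fun μ => -μ.re) / 2, ?_, ?_⟩
      · obtain ⟨μ₀, hμ₀, he⟩ := Finset.exists_mem_eq_inf' hFne fun μ => -μ.re
        have h1 := hB μ₀ ((Set.Finite.mem_toFinset _).mp hμ₀)
        rw [he]; linarith
      · intro μ hμ
        have h1 : ((Matrix.finite_spectrum B).toFinset.inf' hFne fun μ => -μ.re) ≤ -μ.re :=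
          Finset.inf'_le _ ((Set.Finite.mem_toFinset _).mpr hμ)
        linarith
    · exact ⟨1, one_pos, fun μ hμ => absurd ⟨μ, hμ⟩ hS⟩
  choose Cv hCv0 hCv using fun j : Fin n => vec_decay B hc hcs (Pi.single j 1)
  refine ⟨c, ∑ j, Cv j, hc, Finset.sum_nonneg fun j _ => hCv0 j, fun t ht i j => ?_⟩
  have h1 : NormedSpace.exp (t • B) i j
      = (NormedSpace.exp (t • B) *ᵥ Pi.single j 1) i := by
    rw [Matrix.mulVec_single]
    exact (mul_one _).symm
  rw [h1]
  calc ‖(NormedSpace.exp (t • B) *ᵥ Pi.single j 1) i‖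
      ≤ ‖NormedSpace.exp (t • B) *ᵥ Pi.single j 1‖ := norm_le_pi_norm _ i
    _ ≤ Cv j * Real.exp (-(c * t)) := hCv j t ht
    _ ≤ (∑ j, Cv j) * Real.exp (-(c * t)) :=
        mul_le_mul_of_nonneg_right
          (Finset.single_le_sum (fun j _ => hCv0 j) (Finset.mem_univ j))
          (Real.exp_nonneg _)

/-- Entrywise decay for a real Hurwitz matrix. -/
lemma rentry_decay {n : ℕ} (A : Matrix (Fin n) (Fin n) ℝ) (hA : IsHurwitz A) :
    ∃ c C : ℝ, 0 < c ∧ 0 ≤ C ∧ ∀ t : ℝ, 0 ≤ t → ∀ i j,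
      |NormedSpace.exp (t • A) i j| ≤ C * Real.exp (-(c * t)) := by
  obtain ⟨c, C, hc, hC, h⟩ := centry_decay (A.map Complex.ofReal) hA
  refine ⟨c, C, hc, hC, fun t ht i j => ?_⟩
  have hsm : (t • A).map Complex.ofReal = t • A.map Complex.ofReal := by
    ext i j
    simp [Matrix.map_apply, Complex.real_smul]
  have hmap : (NormedSpace.exp (t • A)).map Complex.ofReal
      = NormedSpace.exp (t • A.map Complex.ofReal) := by
    have h1 := NormedSpace.map_exp (Complex.ofRealHom.mapMatrix (m := Fin n))
      (Continuous.matrix_map continuous_id Complex.continuous_ofReal) (t • A)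
    have h2 : (NormedSpace.exp (t • A)).map Complex.ofReal
        = NormedSpace.exp ((t • A).map Complex.ofReal) := h1
    rw [h2, hsm]
  have h2 : |NormedSpace.exp (t • A) i j|
      = ‖(NormedSpace.exp (t • A.map Complex.ofReal)) i j‖ := by
    rw [← hmap, Matrix.map_apply, Complex.norm_real, Real.norm_eq_abs]
  rw [h2]
  exact h t ht i j

/-- Derivative of entries of `exp (t•A) * (exp (t•A))ᵀ`. -/
lemma hasDerivAt_entryQ {n : ℕ} (A : Matrix (Fin n) (Fin n) ℝ) (i j : Fin n) (t : ℝ) :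
    HasDerivAt (fun s : ℝ => (NormedSpace.exp (s • A) * (NormedSpace.exp (s • A))ᵀ) i j)
      ((A * (NormedSpace.exp (t • A) * (NormedSpace.exp (t • A))ᵀ)
        + (NormedSpace.exp (t • A) * (NormedSpace.exp (t • A))ᵀ) * Aᵀ) i j) t := by
  have hE : HasDerivAt (fun s : ℝ => NormedSpace.exp (s • A))
      (A * NormedSpace.exp (t • A)) t := hasDerivAt_exp_smul_const' (𝕂 := ℝ) A t
  let Ltr : Matrix (Fin n) (Fin n) ℝ →ₗ[ℝ] Matrix (Fin n) (Fin n) ℝ :=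
    { toFun := Matrix.transpose
      map_add' := fun M₁ M₂ => Matrix.transpose_add M₁ M₂
      map_smul' := fun r M => Matrix.transpose_smul r M }
  have hET : HasDerivAt (fun s : ℝ => (NormedSpace.exp (s • A))ᵀ)
      ((A * NormedSpace.exp (t • A))ᵀ) t :=
    (LinearMap.toContinuousLinearMap Ltr).hasFDerivAt.comp_hasDerivAt t hE
  have hQ := hE.mul hET
  have heq2 : (A * NormedSpace.exp (t • A)) * (NormedSpace.exp (t • A))ᵀ
      + NormedSpace.exp (t • A) * (A * NormedSpace.exp (t • A))ᵀ
      = A * (NormedSpace.exp (t • A) * (NormedSpace.exp (t • A))ᵀ)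
        + (NormedSpace.exp (t • A) * (NormedSpace.exp (t • A))ᵀ) * Aᵀ := by
    rw [Matrix.transpose_mul, mul_assoc, ← mul_assoc (NormedSpace.exp (t • A)), mul_assoc]
  rw [heq2] at hQ
  let Le : Matrix (Fin n) (Fin n) ℝ →ₗ[ℝ] ℝ :=
    { toFun := fun M => M i j
      map_add' := fun _ _ => rfl
      map_smul' := fun _ _ => rfl }
  exact (LinearMap.toContinuousLinearMap Le).hasFDerivAt.comp_hasDerivAt t hQ

/-- Continuity of the entries of `exp (t•A)`. -/
lemma cont_entryE {n : ℕ} (A : Matrix (Fin n) (Fin n) ℝ) (i j : Fin n) :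
    Continuous fun t : ℝ => NormedSpace.exp (t • A) i j := by
  have h1 : Continuous fun t : ℝ => NormedSpace.exp (t • A) :=
    exp_continuous.comp (continuous_id.smul continuous_const)
  let Le : Matrix (Fin n) (Fin n) ℝ →ₗ[ℝ] ℝ :=
    { toFun := fun M => M i j
      map_add' := fun _ _ => rfl
      map_smul' := fun _ _ => rfl }
  exact (LinearMap.toContinuousLinearMap Le).continuous.comp h1

end LyapunovAux

end InnerAnalysis

open MeasureTheory Set Filter in
/-- If `A` is Hurwitz and `X ≥ 0` satisfies `AᵀX + XA + H₁ − H₂ = 0` with `H₁, H₂ ≥ 0`,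
then `Tr(X) ≤ Tr(P_A)·Tr(H₁)` where `P_A = ∫₀^∞ exp(Aᵀt) exp(At) dt`. -/
theorem trace_bound_lyapunov {n : ℕ}
    (A X H₁ H₂ : Matrix (Fin n) (Fin n) ℝ) (hA : IsHurwitz A)
    (hX : X.PosSemidef) (hH₁ : H₁.PosSemidef) (hH₂ : H₂.PosSemidef)
    (heq : Aᵀ * X + X * A + H₁ - H₂ = 0) :
    let PA : Matrix (Fin n) (Fin n) ℝ :=
      Matrix.of fun i j => ∫ t in Set.Ioi (0 : ℝ),
        ((NormedSpace.exp (t • A))ᵀ * NormedSpace.exp (t • A)) i j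
    X.trace ≤ PA.trace * H₁.trace := by
  intro PA
  classical
  obtain ⟨c, C, hc, hC, hdec⟩ := LyapunovAux.rentry_decay A hA
  set E : ℝ → Matrix (Fin n) (Fin n) ℝ := fun t => NormedSpace.exp (t • A) with hE
  set Q : ℝ → Matrix (Fin n) (Fin n) ℝ := fun t => E t * (E t)ᵀ with hQdef
  set G : ℝ → Matrix (Fin n) (Fin n) ℝ := fun t => (E t)ᵀ * E t with hGdef
  have h2c : (0 : ℝ) < 2 * c := by linarith
  -- entrywise bounds
  have hEdec : ∀ t : ℝ, 0 ≤ t → ∀ i j, |E t i j| ≤ C * Real.exp (-(c * t)) := by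
    intro t ht i j; exact hdec t ht i j
  have hprod : ∀ t : ℝ, 0 ≤ t → ∀ (a b d e : Fin n),
      |E t a b * E t d e| ≤ C ^ 2 * Real.exp (-(2 * c) * t) := by
    intro t ht a b d e
    rw [abs_mul]
    calc |E t a b| * |E t d e| ≤ (C * Real.exp (-(c * t))) * (C * Real.exp (-(c * t))) :=
          mul_le_mul (hEdec t ht a b) (hEdec t ht d e) (abs_nonneg _)
            (mul_nonneg hC (Real.exp_nonneg _))
      _ = C ^ 2 * Real.exp (-(2 * c) * t) := by
          rw [show (C * Real.exp (-(c * t))) * (C * Real.exp (-(c * t)))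
            = C ^ 2 * (Real.exp (-(c * t)) * Real.exp (-(c * t))) by ring, ← Real.exp_add]
          ring_nf
  have hQb : ∀ t : ℝ, 0 ≤ t → ∀ i j, |Q t i j| ≤ (n * C ^ 2) * Real.exp (-(2 * c) * t) := by
    intro t ht i j
    have h1 : Q t i j = ∑ k, E t i k * E t j k := by
      simp [hQdef, Matrix.mul_apply, Matrix.transpose_apply]
    rw [h1]
    calc |∑ k, E t i k * E t j k| ≤ ∑ k, |E t i k * E t j k| := Finset.abs_sum_le_sum_abs _ _
      _ ≤ ∑ _k : Fin n, C ^ 2 * Real.exp (-(2 * c) * t) :=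
          Finset.sum_le_sum fun k _ => hprod t ht i k j k
      _ = (n * C ^ 2) * Real.exp (-(2 * c) * t) := by
          rw [Finset.sum_const, Finset.card_univ, Fintype.card_fin, nsmul_eq_mul]; ring
  have hGb : ∀ t : ℝ, 0 ≤ t → ∀ i j, |G t i j| ≤ (n * C ^ 2) * Real.exp (-(2 * c) * t) := by
    intro t ht i j
    have h1 : G t i j = ∑ k, E t k i * E t k j := by
      simp [hGdef, Matrix.mul_apply, Matrix.transpose_apply]
    rw [h1]
    calc |∑ k, E t k i * E t k j| ≤ ∑ k, |E t k i * E t k j| := Finset.abs_sum_le_sum_abs _ _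
      _ ≤ ∑ _k : Fin n, C ^ 2 * Real.exp (-(2 * c) * t) :=
          Finset.sum_le_sum fun k _ => hprod t ht k i k j
      _ = (n * C ^ 2) * Real.exp (-(2 * c) * t) := by
          rw [Finset.sum_const, Finset.card_univ, Fintype.card_fin, nsmul_eq_mul]; ring
  -- continuity of entries
  have hEc : ∀ i j, Continuous fun t : ℝ => E t i j := by
    intro i j; exact LyapunovAux.cont_entryE A i j
  have hQc : ∀ i j, Continuous fun t : ℝ => Q t i j := by
    intro i j
    have h1 : (fun t : ℝ => Q t i j) = fun t => ∑ k, E t i k * E t j k := by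
      ext t; simp [hQdef, Matrix.mul_apply, Matrix.transpose_apply]
    rw [h1]
    exact continuous_finset_sum _ fun k _ => (hEc i k).mul (hEc j k)
  have hGc : ∀ i j, Continuous fun t : ℝ => G t i j := by
    intro i j
    have h1 : (fun t : ℝ => G t i j) = fun t => ∑ k, E t k i * E t k j := by
      ext t; simp [hGdef, Matrix.mul_apply, Matrix.transpose_apply]
    rw [h1]
    exact continuous_finset_sum _ fun k _ => (hEc k i).mul (hEc k j)
  -- integrability
  have hdom : IntegrableOn (fun t : ℝ => (n * C ^ 2) * Real.exp (-(2 * c) * t))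
      (Ioi 0) volume := (exp_neg_integrableOn_Ioi 0 h2c).const_mul _
  have hQint : ∀ i j, IntegrableOn (fun t : ℝ => Q t i j) (Ioi 0) volume := by
    intro i j
    refine hdom.mono' ((hQc i j).aestronglyMeasurable.restrict) ?_
    refine (ae_restrict_iff' measurableSet_Ioi).mpr (ae_of_all _ fun t ht => ?_)
    rw [Real.norm_eq_abs]
    exact hQb t (le_of_lt ht) i j
  have hGint : ∀ i j, IntegrableOn (fun t : ℝ => G t i j) (Ioi 0) volume := by
    intro i j
    refine hdom.mono' ((hGc i j).aestronglyMeasurable.restrict) ?_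
    refine (ae_restrict_iff' measurableSet_Ioi).mpr (ae_of_all _ fun t ht => ?_)
    rw [Real.norm_eq_abs]
    exact hGb t (le_of_lt ht) i j
  -- limit at infinity
  have htend0 : Tendsto (fun t : ℝ => (n * C ^ 2) * Real.exp (-(2 * c) * t)) atTop (nhds 0) := by
    have h1 : Tendsto (fun t : ℝ => -(2 * c) * t) atTop atBot := by
      have h2 : Tendsto (fun t : ℝ => (2 * c) * t) atTop atTop :=
        Filter.Tendsto.const_mul_atTop h2c tendsto_id
      have h3 := tendsto_neg_atTop_atBot.comp h2
      refine h3.congr fun t => ?_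
      simp [Function.comp]
    have h4 : Tendsto (fun t : ℝ => Real.exp (-(2 * c) * t)) atTop (nhds 0) :=
      Real.tendsto_exp_comp_nhds_zero.mpr h1
    simpa using h4.const_mul (n * C ^ 2 : ℝ)
  have hQtend : ∀ i j, Tendsto (fun t : ℝ => Q t i j) atTop (nhds 0) := by
    intro i j
    refine squeeze_zero_norm' ?_ htend0
    filter_upwards [eventually_ge_atTop (0 : ℝ)] with t ht
    rw [Real.norm_eq_abs]
    exact hQb t ht i j
  -- derivative of entries of Q
  have hQD : ∀ (i j : Fin n) (t : ℝ),
      HasDerivAt (fun s : ℝ => Q s i j) ((A * Q t + Q t * Aᵀ) i j) t := by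
    intro i j t; exact LyapunovAux.hasDerivAt_entryQ A i j t
  -- integrability of the derivative entries
  have hintL : ∀ i j, IntegrableOn (fun t : ℝ => (A * Q t) i j) (Ioi 0) volume := by
    intro i j
    have h1 : (fun t : ℝ => (A * Q t) i j) = fun t => ∑ k, A i k * Q t k j := by
      ext t; rw [Matrix.mul_apply]
    rw [h1]
    exact integrable_finset_sum _ fun k _ => (hQint k j).const_mul _
  have hintR : ∀ i j, IntegrableOn (fun t : ℝ => (Q t * Aᵀ) i j) (Ioi 0) volume := by
    intro i j
    have h1 : (fun t : ℝ => (Q t * Aᵀ) i j) = fun t => ∑ k, Q t i k * Aᵀ k j := by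
      ext t; rw [Matrix.mul_apply]
    rw [h1]
    exact integrable_finset_sum _ fun k _ => (hQint i k).mul_const _
  have hintLR : ∀ i j, IntegrableOn (fun t : ℝ => (A * Q t + Q t * Aᵀ) i j) (Ioi 0) volume := by
    intro i j
    have h1 : (fun t : ℝ => (A * Q t + Q t * Aᵀ) i j)
        = fun t => (A * Q t) i j + (Q t * Aᵀ) i j := by
      ext t; rw [Matrix.add_apply]
    rw [h1]
    exact (hintL i j).add (hintR i j)
  -- value at 0
  have hQ0 : Q 0 = 1 := by
    have hE0 : E 0 = 1 := by
      rw [hE]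
      simp only [zero_smul]
      exact NormedSpace.exp_zero
    rw [hQdef]
    simp only [hE0, Matrix.transpose_one, one_mul]
  -- FTC on [0, ∞)
  have hFTC : ∀ i j, (∫ t in Ioi (0:ℝ), (A * Q t + Q t * Aᵀ) i j) = (-1 : Matrix (Fin n) (Fin n) ℝ) i j := by
    intro i j
    have h1 := MeasureTheory.integral_Ioi_of_hasDerivAt_of_tendsto'
      (f := fun t : ℝ => Q t i j) (f' := fun t : ℝ => (A * Q t + Q t * Aᵀ) i j)
      (a := 0) (m := 0) (fun x _ => hQD i j x) (hintLR i j) (hQtend i j)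
    rw [h1]
    show (0:ℝ) - Q 0 i j = (-1 : Matrix (Fin n) (Fin n) ℝ) i j
    rw [hQ0, zero_sub, Matrix.neg_apply]
  -- the candidate solution of the dual Lyapunov equation
  set Qi : Matrix (Fin n) (Fin n) ℝ :=
    Matrix.of (fun i j => ∫ t in Ioi (0:ℝ), Q t i j) with hQi
  have hQiapp : ∀ i j, Qi i j = ∫ t in Ioi (0:ℝ), Q t i j := fun i j => rfl
  have hmulL : ∀ i j, (A * Qi) i j = ∫ t in Ioi (0:ℝ), (A * Q t) i j := by
    intro i j
    calc (A * Qi) i j = ∑ k, A i k * ∫ t in Ioi (0:ℝ), Q t k j := by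
          rw [Matrix.mul_apply]
          rfl
      _ = ∑ k, ∫ t in Ioi (0:ℝ), A i k * Q t k j := by
          refine Finset.sum_congr rfl fun k _ => ?_
          rw [MeasureTheory.integral_const_mul]
      _ = ∫ t in Ioi (0:ℝ), ∑ k, A i k * Q t k j :=
          (MeasureTheory.integral_finset_sum _ fun k _ => (hQint k j).const_mul _).symm
      _ = ∫ t in Ioi (0:ℝ), (A * Q t) i j := by
          have h1 : (fun t : ℝ => ∑ k, A i k * Q t k j) = fun t => (A * Q t) i j := by
            ext t; rw [Matrix.mul_apply]
          rw [h1]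
  have hmulR : ∀ i j, (Qi * Aᵀ) i j = ∫ t in Ioi (0:ℝ), (Q t * Aᵀ) i j := by
    intro i j
    calc (Qi * Aᵀ) i j = ∑ k, (∫ t in Ioi (0:ℝ), Q t i k) * Aᵀ k j := by
          rw [Matrix.mul_apply]
          rfl
      _ = ∑ k, ∫ t in Ioi (0:ℝ), Q t i k * Aᵀ k j := by
          refine Finset.sum_congr rfl fun k _ => ?_
          rw [MeasureTheory.integral_mul_const]
      _ = ∫ t in Ioi (0:ℝ), ∑ k, Q t i k * Aᵀ k j :=
          (MeasureTheory.integral_finset_sum _ fun k _ => (hQint i k).mul_const _).symm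
      _ = ∫ t in Ioi (0:ℝ), (Q t * Aᵀ) i j := by
          have h1 : (fun t : ℝ => ∑ k, Q t i k * Aᵀ k j) = fun t => (Q t * Aᵀ) i j := by
            ext t; rw [Matrix.mul_apply]
          rw [h1]
  have hlyap : A * Qi + Qi * Aᵀ = -1 := by
    ext i j
    rw [Matrix.add_apply, hmulL i j, hmulR i j,
      ← MeasureTheory.integral_add (hintL i j) (hintR i j)]
    have h1 : (fun t : ℝ => (A * Q t) i j + (Q t * Aᵀ) i j)
        = fun t => (A * Q t + Q t * Aᵀ) i j := by
      ext t; rw [Matrix.add_apply]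
    rw [h1, hFTC i j]
  -- Qi is positive semidefinite
  have hQipsd : Qi.PosSemidef := by
    refine Matrix.PosSemidef.of_dotProduct_mulVec_nonneg ?_ ?_
    · ext i j
      rw [Matrix.conjTranspose_apply, star_trivial]
      show Qi j i = Qi i j
      rw [hQiapp, hQiapp]
      have h1 : (fun t : ℝ => Q t j i) = fun t => Q t i j := by
        ext t
        simp [hQdef, Matrix.mul_apply, Matrix.transpose_apply, mul_comm]
      rw [h1]
    · intro x
      rw [star_trivial]
      have h1 : dotProduct x (Qi *ᵥ x)
          = ∑ i, ∑ j, x i * x j * ∫ t in Ioi (0:ℝ), Q t i j := by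
        rw [dotProduct]
        refine Finset.sum_congr rfl fun i _ => ?_
        rw [Matrix.mulVec, dotProduct, Finset.mul_sum]
        refine Finset.sum_congr rfl fun j _ => ?_
        rw [hQiapp]; ring
      have h2 : ∀ i j : Fin n, x i * x j * (∫ t in Ioi (0:ℝ), Q t i j)
          = ∫ t in Ioi (0:ℝ), x i * x j * Q t i j := fun i j =>
        (MeasureTheory.integral_const_mul _ _).symm
      rw [h1]
      have h3 : ∑ i, ∑ j, x i * x j * ∫ t in Ioi (0:ℝ), Q t i j
          = ∫ t in Ioi (0:ℝ), ∑ i, ∑ j, x i * x j * Q t i j := by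
        rw [MeasureTheory.integral_finset_sum _
          (fun i _ => integrable_finset_sum _ fun j _ => ((hQint i j).const_mul _))]
        refine Finset.sum_congr rfl fun i _ => ?_
        rw [MeasureTheory.integral_finset_sum _ (fun j _ => ((hQint i j).const_mul _))]
        exact Finset.sum_congr rfl fun j _ => h2 i j
      rw [h3]
      refine MeasureTheory.integral_nonneg fun t => ?_
      have h4 : ∑ i, ∑ j, x i * x j * Q t i j = ∑ k, (∑ i, x i * E t i k) ^ 2 := by
        have h5 : ∀ i j : Fin n, x i * x j * Q t i j
            = ∑ k, (x i * E t i k) * (x j * E t j k) := by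
          intro i j
          rw [show Q t i j = ∑ k, E t i k * E t j k by
            simp [hQdef, Matrix.mul_apply, Matrix.transpose_apply]]
          rw [Finset.mul_sum]
          exact Finset.sum_congr rfl fun k _ => by ring
        have h6 : ∑ k : Fin n, (∑ i, x i * E t i k) ^ 2
            = ∑ i, ∑ j, ∑ k, (x i * E t i k) * (x j * E t j k) := by
          have h7 : ∀ k : Fin n, (∑ i, x i * E t i k) ^ 2
              = ∑ i, ∑ j, (x i * E t i k) * (x j * E t j k) := by
            intro k
            rw [sq, Finset.sum_mul_sum]
          rw [Finset.sum_congr rfl fun k _ => h7 k, Finset.sum_comm]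
          exact Finset.sum_congr rfl fun i _ => Finset.sum_comm
        calc ∑ i, ∑ j, x i * x j * Q t i j
            = ∑ i, ∑ j, ∑ k, (x i * E t i k) * (x j * E t j k) := by
              exact Finset.sum_congr rfl fun i _ => Finset.sum_congr rfl fun j _ => h5 i j
          _ = ∑ k, (∑ i, x i * E t i k) ^ 2 := h6.symm
      rw [h4]
      exact Finset.sum_nonneg fun k _ => sq_nonneg _
  -- trace of Qi equals trace of PA
  have htr : Qi.trace = PA.trace := by
    have h1 : Qi.trace = ∑ i, ∫ t in Ioi (0:ℝ), Q t i i := rfl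
    have h2 : PA.trace = ∑ i, ∫ t in Ioi (0:ℝ), G t i i := rfl
    rw [h1, h2, ← MeasureTheory.integral_finset_sum _ (fun i _ => hQint i i),
      ← MeasureTheory.integral_finset_sum _ (fun i _ => hGint i i)]
    have h3 : (fun t : ℝ => ∑ i, Q t i i) = fun t => ∑ i, G t i i := by
      ext t
      have h4 : ∑ i, Q t i i = (Q t).trace := rfl
      have h5 : ∑ i, G t i i = (G t).trace := rfl
      rw [h4, h5, hQdef, hGdef]
      exact Matrix.trace_mul_comm _ _
    rw [h3]
  -- trace identity
  have hX2 : Aᵀ * X + X * A = H₂ - H₁ :=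
    eq_sub_of_add_eq (sub_eq_zero.mp heq)
  have htrace_eq : X.trace = ((H₁ - H₂) * Qi).trace := by
    have h1 : X.trace = -((X * (A * Qi)).trace + (X * (Qi * Aᵀ)).trace) := by
      have h2 : X * (A * Qi + Qi * Aᵀ) = -X := by rw [hlyap, mul_neg_one]
      have h3 : X * (A * Qi) + X * (Qi * Aᵀ) = -X := by rw [← mul_add, h2]
      have h4 := congrArg Matrix.trace h3
      rw [Matrix.trace_add, Matrix.trace_neg] at h4
      linarith
    have h5 : ((H₂ - H₁) * Qi).trace = (X * (Qi * Aᵀ)).trace + (X * (A * Qi)).trace := by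
      rw [← hX2, Matrix.add_mul, Matrix.trace_add]
      congr 1
      · rw [Matrix.mul_assoc, Matrix.trace_mul_comm, Matrix.mul_assoc]
      · rw [Matrix.mul_assoc]
    have h6 : ((H₁ - H₂) * Qi).trace = -(((H₂ - H₁) * Qi).trace) := by
      rw [show H₁ - H₂ = -(H₂ - H₁) from (neg_sub _ _).symm, neg_mul, Matrix.trace_neg]
    rw [h6, h5]
    linarith
  -- conclusion
  rw [htrace_eq, Matrix.sub_mul, Matrix.trace_sub]
  have h7 : 0 ≤ (H₂ * Qi).trace := LyapunovAux.trace_mul_nonneg hH₂ hQipsd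
  have h8 : (H₁ * Qi).trace ≤ H₁.trace * Qi.trace :=
    LyapunovAux.trace_mul_le_trace_mul_trace hH₁ hQipsd
  rw [← htr]
  calc (H₁ * Qi).trace - (H₂ * Qi).trace ≤ (H₁ * Qi).trace := by linarith
    _ ≤ H₁.trace * Qi.trace := h8
    _ = Qi.trace * H₁.trace := mul_comm _ _
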